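/- arXiv:2405.08097 — 4 statements merged into one kernel-verified Lean document; each statement's English description precedes it below -/
import Mathlib

section
/- Let Γ be a group acting on a topological measure space X, and G ≤ Γ a finite-index subgroup. Suppose f_1,...,f_r : X → ℝ are Γ-invariant functions that generically separate Γ-orbits (i.e., there is a closed, measure-zero, Γ-invariant subset B' ⊆ X such that any two points outside B' lying in distinct Γ-orbits are separated by some f_i). Suppose f*_1,...,f*_s : X → ℝ are G-invariant functions such that: (a) every element γ ∈ Γ fixing all f*_j lies in G, and (b) for every j and every γ ∈ Γ with γf*_j ≠ f*_j, the zero set of γf*_j − f*_j is closed and has measure zero. Then there exists a closed, measure-zero, G-invariant subset B'' ⊆ X such that any two points of X outside B'' lying in distinct G-orbits are separated by some function among f_1,...,f_r,f*_1,...,f*_s. -/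
open MeasureTheory

/-- the "Galois theorem for machine learning". -/
theorem stmt1 {Γ : Type*} [Group Γ] {X : Type*} [MulAction Γ X]
    [TopologicalSpace X] [MeasurableSpace X] (μ : Measure X)
    (G : Subgroup Γ) [G.FiniteIndex]
    (r s : ℕ) (f : Fin r → X → ℝ) (fstar : Fin s → X → ℝ)
    (hfΓ : ∀ i (γ : Γ) x, f i (γ • x) = f i x)
    (hgen : ∃ B' : Set X, IsClosed B' ∧ μ B' = 0 ∧
      (∀ (γ : Γ) x, x ∈ B' → γ • x ∈ B') ∧
      (∀ x ∉ B', ∀ y ∉ B', (∀ i, f i x = f i y) → ∃ γ : Γ, γ • x = y))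
    (hfsG : ∀ j, ∀ g ∈ G, ∀ x, fstar j (g • x) = fstar j x)
    (ha : ∀ γ : Γ, (∀ j x, fstar j (γ⁻¹ • x) = fstar j x) → γ ∈ G)
    (hb : ∀ j (γ : Γ), (∃ x, fstar j (γ⁻¹ • x) ≠ fstar j x) →
      IsClosed {x | fstar j (γ⁻¹ • x) = fstar j x} ∧
      μ {x | fstar j (γ⁻¹ • x) = fstar j x} = 0) :
    ∃ B'' : Set X, IsClosed B'' ∧ μ B'' = 0 ∧
      (∀ g ∈ G, ∀ x ∈ B'', g • x ∈ B'') ∧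
      (∀ x ∉ B'', ∀ y ∉ B'',
        (∀ i, f i x = f i y) → (∀ j, fstar j x = fstar j y) →
        ∃ g ∈ G, g • x = y) := by
  classical
  obtain ⟨B', hB'closed, hB'null, hB'inv, hB'sep⟩ := hgen
  -- the function x ↦ fstar j (γ⁻¹ • x) depends only on the coset γG
  have key : ∀ (γ₁ γ₂ : Γ), (γ₁ : Γ ⧸ G) = (γ₂ : Γ ⧸ G) →
      ∀ j x, fstar j (γ₁⁻¹ • x) = fstar j (γ₂⁻¹ • x) := by
    intro γ₁ γ₂ h j x
    have hm : γ₁⁻¹ * γ₂ ∈ G := QuotientGroup.eq.mp h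
    have : γ₂⁻¹ • x = (γ₁⁻¹ * γ₂)⁻¹ • (γ₁⁻¹ • x) := by
      rw [smul_smul]; congr 1; group
    rw [this, hfsG j _ (inv_mem hm)]
  haveI : Finite (Γ ⧸ G) := Subgroup.finite_quotient_of_finiteIndex
  set Z : Γ ⧸ G → Fin s → Set X := fun c j =>
    {x | fstar j ((Quotient.out c)⁻¹ • x) = fstar j x ∧
      ∃ y, fstar j ((Quotient.out c)⁻¹ • y) ≠ fstar j y} with hZ
  have hZclosed : ∀ c j, IsClosed (Z c j) ∧ μ (Z c j) = 0 := by
    intro c j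
    by_cases h : ∃ y, fstar j ((Quotient.out c)⁻¹ • y) ≠ fstar j y
    · have : Z c j = {x | fstar j ((Quotient.out c)⁻¹ • x) = fstar j x} := by
        ext x; simp [hZ, h]
      rw [this]; exact hb j _ h
    · have : Z c j = ∅ := by
        ext x; simp only [hZ, Set.mem_setOf_eq, Set.mem_empty_iff_false, iff_false]
        exact fun hx => h hx.2
      rw [this]; simp
  refine ⟨B' ∪ ⋃ c, ⋃ j, Z c j, ?_, ?_, ?_, ?_⟩
  · exact hB'closed.union (isClosed_iUnion_of_finite fun c =>
      isClosed_iUnion_of_finite fun j => (hZclosed c j).1)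
  · refine le_antisymm ?_ zero_le
    calc μ (B' ∪ ⋃ c, ⋃ j, Z c j) ≤ μ B' + μ (⋃ c, ⋃ j, Z c j) := measure_union_le _ _
    _ = 0 := by
        rw [hB'null, measure_iUnion_null fun c => measure_iUnion_null fun j => (hZclosed c j).2]
        simp
  · rintro g hg x (hx | hx)
    · exact Or.inl (hB'inv g x hx)
    · right
      simp only [Set.mem_iUnion] at hx ⊢
      obtain ⟨c, j, hx1, y₀, hy₀⟩ := hx
      set γ : Γ := Quotient.out c
      refine ⟨((g * γ * g⁻¹ : Γ) : Γ ⧸ G), j, ?_, ?_⟩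
      · have hco := QuotientGroup.out_eq' ((g * γ * g⁻¹ : Γ) : Γ ⧸ G)
        rw [key _ _ hco j]
        have hsm : (g * γ * g⁻¹)⁻¹ • (g • x) = g • (γ⁻¹ • x) := by
          rw [smul_smul, smul_smul]; congr 1; group
        rw [hsm, hfsG j g hg, hx1, hfsG j g hg]
      · have hco := QuotientGroup.out_eq' ((g * γ * g⁻¹ : Γ) : Γ ⧸ G)
        refine ⟨g • y₀, ?_⟩
        rw [key _ _ hco j]
        have hsm : (g * γ * g⁻¹)⁻¹ • (g • y₀) = g • (γ⁻¹ • y₀) := by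
          rw [smul_smul, smul_smul]; congr 1; group
        rw [hsm, hfsG j g hg, hfsG j g hg]
        exact hy₀
  · intro x hx y hy hf hfs
    have hx' : x ∉ B' := fun h => hx (Or.inl h)
    have hy' : y ∉ B' := fun h => hy (Or.inl h)
    obtain ⟨γ, hγ⟩ := hB'sep x hx' y hy' hf
    have hγG : γ⁻¹ ∈ G := by
      apply ha
      intro j x'
      by_contra hcon
      push_neg at hcon
      apply hx
      right
      simp only [Set.mem_iUnion]
      have hco := QuotientGroup.out_eq' ((γ⁻¹ : Γ) : Γ ⧸ G)
      refine ⟨((γ⁻¹ : Γ) : Γ ⧸ G), j, ?_, ?_⟩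
      · rw [key _ _ hco j, inv_inv, hγ]
        exact (hfs j).symm
      · exact ⟨x', by rw [key _ _ hco j]; exact hcon⟩
    exact ⟨γ, (inv_mem_iff).mp hγG, hγ⟩
end

section
/- Let n ≥ 3. Consider the polynomial f*(X) = Σ_{i ≠ j} X_{ii} X_{ij} in the variables X_{ii} (1 ≤ i ≤ n) and X_{ij} = X_{ji} (1 ≤ i < j ≤ n). Let Γ = S_n × S_{n(n−1)/2} act on these variables by permuting the diagonal variables X_{ii} via the first factor and the off-diagonal variables X_{ij} (i<j) via the second factor. Then an element (σ,τ) ∈ Γ fixes f* if and only if σ and τ are induced by a common permutation π of {1,...,n}, i.e., σ sends X_{ii} to X_{π(i)π(i)} and τ sends X_{ij} to X_{π(i)π(j)}. -/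
open MvPolynomial

/-- The polynomial `f⋆ = ∑_{i ≠ j} X_{ii} X_{ij}` in variables indexed by
`Sym2 (Fin n)` (so that `X_{ij} = X_{ji}` automatically). -/
noncomputable def fstarPoly (n : ℕ) : MvPolynomial (Sym2 (Fin n)) ℝ :=
  ∑ p ∈ Finset.univ.offDiag,
    X (Sym2.mk p.1 p.1) * X (Sym2.mk p.1 p.2)

/-- If two "pair" finsupps agree, the underlying pairs agree up to swap. -/
lemma pair_finsupp_eq {α : Type*} {a b c d : α} (hab : a ≠ b) (hcd : c ≠ d)
    (h : Finsupp.single a 1 + Finsupp.single b 1 = (Finsupp.single c 1 + Finsupp.single d 1 : α →₀ ℕ)) :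
    (a = c ∧ b = d) ∨ (a = d ∧ b = c) := by
  classical
  have ha := DFunLike.congr_fun h a
  have hb := DFunLike.congr_fun h b
  simp only [Finsupp.add_apply, Finsupp.single_apply] at ha hb
  by_cases hac : c = a <;> by_cases had : d = a <;> by_cases hbc : c = b <;> by_cases hbd : d = b <;>
    simp_all

/-- Characterization of the nonzero coefficients of `fstarPoly`. -/
lemma fstar_coeff_ne_zero_iff (n : ℕ) (m : Sym2 (Fin n) →₀ ℕ) :
    coeff m (fstarPoly n) ≠ 0 ↔ ∃ p ∈ Finset.univ.offDiag (α := Fin n),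
      Finsupp.single (Sym2.mk p.1 p.1) 1 + Finsupp.single (Sym2.mk p.1 p.2) 1 = m := by
  have hX : ∀ a b : Sym2 (Fin n), (X a * X b : MvPolynomial (Sym2 (Fin n)) ℝ)
      = monomial (Finsupp.single a 1 + Finsupp.single b 1) 1 := by
    intro a b
    rw [X, X, monomial_mul, one_mul]
  rw [fstarPoly]
  simp_rw [hX]
  rw [coeff_sum]
  simp_rw [coeff_monomial]
  rw [Finset.sum_boole]
  simp [Finset.filter_eq_empty_iff]

/-- a permutation `ρ` of the variables that preserves the split
into diagonal and off-diagonal variables (i.e. an element `(σ,τ)` of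
`S_n × S_{n(n-1)/2}`) fixes `f⋆` iff it is induced by a single permutation `π`
of `{1,…,n}`, meaning `ρ x = Sym2.map π x` for all variables `x`. -/
theorem stmt5 (n : ℕ) (hn : 3 ≤ n) (ρ : Equiv.Perm (Sym2 (Fin n)))
    (hdiag : ∀ x : Sym2 (Fin n), x.IsDiag → (ρ x).IsDiag)
    (hoff : ∀ x : Sym2 (Fin n), ¬ x.IsDiag → ¬ (ρ x).IsDiag) :
    MvPolynomial.rename (⇑ρ) (fstarPoly n) = fstarPoly n ↔
      ∃ π : Equiv.Perm (Fin n), ∀ x : Sym2 (Fin n), ρ x = Sym2.map π x := by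
  constructor
  · intro h
    -- define σ on diagonal variables
    have hdiag' : ∀ i : Fin n, ∃ a, ρ (Sym2.mk i i) = Sym2.mk a a := by
      intro i
      have := hdiag (Sym2.mk i i) (Sym2.mk_isDiag_iff.mpr rfl)
      revert this
      induction ρ (Sym2.mk i i) using Sym2.ind with
      | _ a b => intro hd; exact ⟨a, by rw [Sym2.mk_isDiag_iff.mp hd]⟩
    choose σ hσ using hdiag'
    have hσinj : Function.Injective σ := by
      intro i j hij
      have : ρ (Sym2.mk i i) = ρ (Sym2.mk j j) := by rw [hσ, hσ, hij]
      have := ρ.injective this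
      rcases Sym2.eq_iff.mp this with ⟨h1, _⟩ | ⟨h1, _⟩ <;> exact h1
    -- key incidence claim
    have key : ∀ i j : Fin n, i ≠ j → ∃ y, y ≠ σ i ∧ ρ (Sym2.mk i j) = Sym2.mk (σ i) y := by
      intro i j hij
      have hc : coeff (Finsupp.single (Sym2.mk i i) 1 + Finsupp.single (Sym2.mk i j) 1)
          (fstarPoly n) ≠ 0 := by
        rw [fstar_coeff_ne_zero_iff]
        exact ⟨(i, j), Finset.mem_offDiag.mpr ⟨Finset.mem_univ _, Finset.mem_univ _, hij⟩, rfl⟩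
      have hc2 : coeff (Finsupp.single (ρ (Sym2.mk i i)) 1
          + Finsupp.single (ρ (Sym2.mk i j)) 1) (fstarPoly n) ≠ 0 := by
        have := coeff_rename_mapDomain (⇑ρ) ρ.injective (fstarPoly n)
          (Finsupp.single (Sym2.mk i i) 1 + Finsupp.single (Sym2.mk i j) 1)
        rw [h] at this
        rw [Finsupp.mapDomain_add, Finsupp.mapDomain_single, Finsupp.mapDomain_single] at this
        rw [this]; exact hc
      rw [fstar_coeff_ne_zero_iff] at hc2
      obtain ⟨p, hp, heq⟩ := hc2
      have hp12 : p.1 ≠ p.2 := (Finset.mem_offDiag.mp hp).2.2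
      have hab : Sym2.mk p.1 p.1 ≠ Sym2.mk p.1 p.2 := by
        intro hx
        rcases Sym2.eq_iff.mp hx with ⟨_, h2⟩ | ⟨h2, _⟩ <;> exact hp12 h2
      have hcd : ρ (Sym2.mk i i) ≠ ρ (Sym2.mk i j) := by
        intro hx
        have hd := hdiag (Sym2.mk i i) (Sym2.mk_isDiag_iff.mpr rfl)
        have ho := hoff (Sym2.mk i j) (fun hd' => hij (Sym2.mk_isDiag_iff.mp hd'))
        exact ho (hx ▸ hd)
      rcases pair_finsupp_eq hab hcd heq with ⟨h1, h2⟩ | ⟨h1, h2⟩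
      · -- s(p1,p1) = ρ s(i,i) = s(σi,σi), s(p1,p2) = ρ s(i,j)
        rw [hσ] at h1
        have hp1 : p.1 = σ i := by
          rcases Sym2.eq_iff.mp h1 with ⟨ha, _⟩ | ⟨ha, _⟩ <;> exact ha
        refine ⟨p.2, ?_, ?_⟩
        · rw [← hp1]; exact hp12.symm
        · rw [← h2, hp1]
      · -- s(p1,p1) = ρ s(i,j): impossible, diagonal versus off-diagonal
        exfalso
        have ho := hoff (Sym2.mk i j) (fun hd' => hij (Sym2.mk_isDiag_iff.mp hd'))
        rw [← h1] at ho
        exact ho (Sym2.mk_isDiag_iff.mpr rfl)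
    -- hence ρ s(i,j) = s(σ i, σ j) for i ≠ j
    have key2 : ∀ i j : Fin n, i ≠ j → ρ (Sym2.mk i j) = Sym2.mk (σ i) (σ j) := by
      intro i j hij
      obtain ⟨y, hy, hiy⟩ := key i j hij
      obtain ⟨z, hz, hjz⟩ := key j i hij.symm
      rw [show Sym2.mk j i = Sym2.mk i j from Sym2.eq_swap] at hjz
      have : Sym2.mk (σ i) y = Sym2.mk (σ j) z := by rw [← hiy, ← hjz]
      rcases Sym2.eq_iff.mp this with ⟨h1, h2⟩ | ⟨h1, h2⟩
      · exact absurd h1 (fun hx => hij (hσinj hx))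
      · rw [hiy, h2]
    refine ⟨Equiv.ofBijective σ (Finite.injective_iff_bijective.mp hσinj), ?_⟩
    intro x
    induction x using Sym2.ind with
    | _ i j =>
      rw [Sym2.map_pair_eq]
      simp only [Equiv.ofBijective_apply]
      by_cases hij : i = j
      · subst hij; exact hσ i
      · exact key2 i j hij
  · rintro ⟨π, hπ⟩
    rw [fstarPoly, map_sum]
    simp_rw [map_mul, rename_X, hπ, Sym2.map_pair_eq]
    refine Finset.sum_equiv (Equiv.prodCongr π π) ?_ ?_
    · intro p
      simp [Finset.mem_offDiag, π.injective.ne_iff]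
    · intro p hp
      rfl
end

section
/- Let d ≤ n. A function F : ℝ^{d×n} → ℝ is invariant under the left action of the orthogonal group O(d) (i.e., F(UV) = F(V) for all U ∈ O(d)) and under the right permutation action of S_n on columns if and only if there exists a function G on symmetric n×n positive semidefinite matrices of rank ≤ d, invariant under simultaneous row-and-column permutations, such that F(V) = G(VᵀV) for all V. -/
open Matrix
open scoped RealInnerProductSpace

noncomputable section

-- inner products of images: ⟪Vx, Vy⟫ determined by Gram matrix
lemma gram_dot (d n : ℕ) (V : Matrix (Fin d) (Fin n) ℝ) (x y : Fin n → ℝ) :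
    (V *ᵥ x) ⬝ᵥ (V *ᵥ y) = x ⬝ᵥ ((Vᵀ * V) *ᵥ y) := by
  rw [Matrix.dotProduct_mulVec, Matrix.vecMul_mulVec, ← Matrix.dotProduct_mulVec]

lemma key (d n : ℕ) (V W : Matrix (Fin d) (Fin n) ℝ) (h : Vᵀ * V = Wᵀ * W) :
    ∃ U ∈ Matrix.orthogonalGroup (Fin d) ℝ, U * V = W := by
  classical
  set E := EuclideanSpace ℝ (Fin d)
  let φV : EuclideanSpace ℝ (Fin n) →ₗ[ℝ] E := Matrix.toEuclideanLin V
  let φW : EuclideanSpace ℝ (Fin n) →ₗ[ℝ] E := Matrix.toEuclideanLin W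
  have hinner : ∀ x y, (inner ℝ (φV x) (φV y) : ℝ) = (inner ℝ (φW x) (φW y) : ℝ) := by
    intro x y
    simp only [φV, φW]
    rw [EuclideanSpace.inner_eq_star_dotProduct, EuclideanSpace.inner_eq_star_dotProduct]
    simp only [star_trivial]
    change (V *ᵥ ((WithLp.equiv 2 (Fin n → ℝ)) y)) ⬝ᵥ (V *ᵥ ((WithLp.equiv 2 (Fin n → ℝ)) x)) =
      (W *ᵥ ((WithLp.equiv 2 (Fin n → ℝ)) y)) ⬝ᵥ (W *ᵥ ((WithLp.equiv 2 (Fin n → ℝ)) x))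
    rw [gram_dot, gram_dot, h]
  have hnorm : ∀ x, ‖φV x‖ = ‖φW x‖ := by
    intro x
    rw [norm_eq_sqrt_real_inner, norm_eq_sqrt_real_inner, hinner]
  have hker : LinearMap.ker φV ≤ LinearMap.ker φW := by
    intro x hx
    simp only [LinearMap.mem_ker] at hx ⊢
    have := hnorm x
    rw [hx, norm_zero] at this
    exact (norm_eq_zero.mp this.symm)
  let q : _ →ₗ[ℝ] E := Submodule.liftQ (LinearMap.ker φV) φW hker
  let L' : LinearMap.range φV →ₗ[ℝ] E := q ∘ₗ (φV.quotKerEquivRange.symm : LinearMap.range φV →ₗ[ℝ] _)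
  have hL' : ∀ x : EuclideanSpace ℝ (Fin n), L' ⟨φV x, LinearMap.mem_range_self φV x⟩ = φW x := by
    intro x
    simp only [L', LinearMap.coe_comp, Function.comp_apply, LinearEquiv.coe_coe]
    rw [LinearMap.quotKerEquivRange_symm_apply_image]
    simp [q]
  have hLnorm : ∀ s : LinearMap.range φV, ‖L' s‖ = ‖s‖ := by
    rintro ⟨_, x, rfl⟩
    rw [hL' x]
    exact (hnorm x).symm
  let L : LinearMap.range φV →ₗᵢ[ℝ] E := ⟨L', hLnorm⟩
  let U := L.extend
  have hU : ∀ x, U (φV x) = φW x := by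
    intro x
    exact (L.extend_apply ⟨φV x, LinearMap.mem_range_self φV x⟩).trans (hL' x)
  let M : Matrix (Fin d) (Fin d) ℝ := Matrix.toEuclideanLin.symm U.toLinearMap
  have hM : Matrix.toEuclideanLin M = U.toLinearMap := Matrix.toEuclideanLin.apply_symm_apply _
  refine ⟨M, ?_, ?_⟩
  · rw [Matrix.mem_orthogonalGroup_iff']
    have : Matrix.toEuclideanLin (star M * M) = Matrix.toEuclideanLin (1 : Matrix (Fin d) (Fin d) ℝ) := by
      apply LinearMap.ext
      intro x
      apply ext_inner_left ℝ
      intro v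
      have hstar : (star M : Matrix (Fin d) (Fin d) ℝ) = Mᴴ := rfl
      rw [hstar]
      have hmul : Matrix.toEuclideanLin (Mᴴ * M) x = Matrix.toEuclideanLin Mᴴ (Matrix.toEuclideanLin M x) := by
        simp [Matrix.toEuclideanLin, Matrix.toLin'_mul]
      rw [hmul, Matrix.toEuclideanLin_conjTranspose_eq_adjoint, hM]
      rw [LinearMap.adjoint_inner_right]
      rw [show (Matrix.toEuclideanLin (1 : Matrix (Fin d) (Fin d) ℝ)) x = x by simp [Matrix.toEuclideanLin]]
      exact (U.inner_map_map v x)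
    have := Matrix.toEuclideanLin.injective this
    rwa [Matrix.star_eq_conjTranspose, Matrix.conjTranspose_eq_transpose_of_trivial] at this
  · apply Matrix.toEuclideanLin.injective
    apply LinearMap.ext
    intro x
    have h1 : Matrix.toEuclideanLin (M * V) x = Matrix.toEuclideanLin M (Matrix.toEuclideanLin V x) := by
      apply (WithLp.equiv 2 (Fin d → ℝ)).injective
      simp [Matrix.mulVec_mulVec]
    rw [h1, hM]
    exact hU x

lemma permMatrix_mul_transpose (n : ℕ) (π : Equiv.Perm (Fin n)) :
    (π.permMatrix ℝ) * (π.permMatrix ℝ)ᵀ = 1 := by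
  rw [← PEquiv.toMatrix_symm, ← PEquiv.toMatrix_trans, ← Equiv.toPEquiv_symm,
    ← Equiv.toPEquiv_trans]
  simp

lemma transpose_mul_permMatrix (n : ℕ) (π : Equiv.Perm (Fin n)) :
    (π.permMatrix ℝ)ᵀ * (π.permMatrix ℝ) = 1 := by
  rw [← PEquiv.toMatrix_symm, ← PEquiv.toMatrix_trans, ← Equiv.toPEquiv_symm,
    ← Equiv.toPEquiv_trans]
  simp

lemma gram_mul (d n : ℕ) (V : Matrix (Fin d) (Fin n) ℝ) (P : Matrix (Fin n) (Fin n) ℝ) :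
    (V * P)ᵀ * (V * P) = Pᵀ * (Vᵀ * V) * P := by
  simp [Matrix.transpose_mul, Matrix.mul_assoc]

lemma conj_cancel (n : ℕ) (π : Equiv.Perm (Fin n)) (A : Matrix (Fin n) (Fin n) ℝ) :
    (π.permMatrix ℝ)ᵀ * (π.permMatrix ℝ * A * (π.permMatrix ℝ)ᵀ) * π.permMatrix ℝ = A := by
  rw [show (π.permMatrix ℝ)ᵀ * (π.permMatrix ℝ * A * (π.permMatrix ℝ)ᵀ) * π.permMatrix ℝ
      = ((π.permMatrix ℝ)ᵀ * π.permMatrix ℝ) * A * ((π.permMatrix ℝ)ᵀ * π.permMatrix ℝ) by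
    simp only [Matrix.mul_assoc], transpose_mul_permMatrix]
  simp

lemma gram_perm (d n : ℕ) (V : Matrix (Fin d) (Fin n) ℝ) (π : Equiv.Perm (Fin n)) :
    (V * (π.permMatrix ℝ)ᵀ)ᵀ * (V * (π.permMatrix ℝ)ᵀ) =
      (π.permMatrix ℝ) * (Vᵀ * V) * (π.permMatrix ℝ)ᵀ := by
  rw [gram_mul]
  simp



/-- a function on `d × n` matrices is invariant under the left
`O(d)`-action and the right column-permutation `S_n`-action iff it factors
through the Gram matrix `VᵀV` via a function on PSD matrices of rank `≤ d`
that is invariant under simultaneous row-and-column permutations. -/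
theorem stmt9 (d n : ℕ) (hdn : d ≤ n) (F : Matrix (Fin d) (Fin n) ℝ → ℝ) :
    ((∀ U : Matrix.orthogonalGroup (Fin d) ℝ, ∀ V, F ((U : Matrix (Fin d) (Fin d) ℝ) * V) = F V) ∧
      (∀ (π : Equiv.Perm (Fin n)) (V), F (V * (π.permMatrix ℝ)ᵀ) = F V)) ↔
    ∃ G : Matrix (Fin n) (Fin n) ℝ → ℝ,
      (∀ A : Matrix (Fin n) (Fin n) ℝ, A.PosSemidef → A.rank ≤ d →
        ∀ π : Equiv.Perm (Fin n),
          G (π.permMatrix ℝ * A * (π.permMatrix ℝ)ᵀ) = G A) ∧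
      (∀ V, F V = G (Vᵀ * V)) := by
  constructor
  · rintro ⟨hO, hP⟩
    have wd : ∀ V W : Matrix (Fin d) (Fin n) ℝ, Vᵀ * V = Wᵀ * W → F V = F W := by
      intro V W hVW
      obtain ⟨U, hUmem, hUV⟩ := key d n V W hVW
      rw [← hUV]
      exact (hO ⟨U, hUmem⟩ V).symm
    classical
    refine ⟨fun A => if h : ∃ V : Matrix (Fin d) (Fin n) ℝ, Vᵀ * V = A then F h.choose else 0,
      ?_, ?_⟩
    · intro A _ _ π
      by_cases h1 : ∃ V : Matrix (Fin d) (Fin n) ℝ, Vᵀ * V = A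
      · obtain ⟨V0, hV0⟩ := h1
        have h2 : ∃ V : Matrix (Fin d) (Fin n) ℝ,
            Vᵀ * V = π.permMatrix ℝ * A * (π.permMatrix ℝ)ᵀ :=
          ⟨V0 * (π.permMatrix ℝ)ᵀ, by rw [gram_perm, hV0]⟩
        simp only [dif_pos (⟨V0, hV0⟩ : ∃ V : Matrix (Fin d) (Fin n) ℝ, Vᵀ * V = A), dif_pos h2]
        have e1 : F (⟨V0, hV0⟩ : ∃ V : Matrix (Fin d) (Fin n) ℝ, Vᵀ * V = A).choose = F V0 :=
          wd _ _ (by rw [(⟨V0, hV0⟩ : ∃ V : Matrix (Fin d) (Fin n) ℝ, Vᵀ * V = A).choose_spec, hV0])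
        have e2 : F h2.choose = F (V0 * (π.permMatrix ℝ)ᵀ) :=
          wd _ _ (by rw [h2.choose_spec, gram_perm, hV0])
        rw [e1, e2, hP π V0]
      · have h2 : ¬ ∃ V : Matrix (Fin d) (Fin n) ℝ,
            Vᵀ * V = π.permMatrix ℝ * A * (π.permMatrix ℝ)ᵀ := by
          rintro ⟨W, hW⟩
          refine h1 ⟨W * π.permMatrix ℝ, ?_⟩
          rw [gram_mul, hW, conj_cancel]
        simp only [dif_neg h1, dif_neg h2]
    · intro V
      have h1 : ∃ W : Matrix (Fin d) (Fin n) ℝ, Wᵀ * W = Vᵀ * V := ⟨V, rfl⟩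
      simp only [dif_pos h1]
      exact (wd _ _ h1.choose_spec).symm
  · rintro ⟨G, hGperm, hGF⟩
    constructor
    · rintro ⟨U, hU⟩ V
      rw [hGF, hGF]
      congr 1
      have hUU : Uᵀ * U = 1 := by
        have := (Matrix.mem_orthogonalGroup_iff' (A := U)).mp hU
        exact this
      rw [Matrix.transpose_mul, Matrix.mul_assoc, ← Matrix.mul_assoc (Uᵀ), hUU, Matrix.one_mul]
    · intro π V
      rw [hGF, hGF, gram_perm]
      apply hGperm
      · have := Matrix.posSemidef_conjTranspose_mul_self V
        rwa [Matrix.conjTranspose_eq_transpose_of_trivial] at this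
      · exact le_trans (Matrix.rank_mul_le_right Vᵀ V) (Matrix.rank_le_height V)
end
end

section
/- Let I₂ ⊆ ℝ[X_{ij} : 1 ≤ i ≤ j ≤ n] be the ideal generated by the 2×2 minors X_{ij}X_{kℓ} − X_{iℓ}X_{kj} (of the symmetric matrix of variables, with X_{ij} = X_{ji}). Let f* = Σ_{i≠j} X_{ii}X_{ij}. For any pair (σ,τ) in the group Γ = S_n × S_{n(n−1)/2} acting by independently permuting the diagonal variables and the off-diagonal variables, if (σ,τ)·f* − f* ∈ I₂, then (σ,τ)·f* = f*. -/
open MvPolynomial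

/-- The ideal `I₂` generated by the `2×2` minors
`X_{ij} X_{kℓ} − X_{iℓ} X_{kj}` of the generic symmetric matrix. -/
noncomputable def minorIdeal2 (n : ℕ) : Ideal (MvPolynomial (Sym2 (Fin n)) ℝ) :=
  Ideal.span {q | ∃ i j k l : Fin n,
    q = X (Sym2.mk i j) * X (Sym2.mk k l) -
        X (Sym2.mk i l) * X (Sym2.mk k j)}

/-- for any variable permutation `ρ` coming from the group
`Γ = S_n × S_{n(n−1)/2}` (i.e. preserving the diagonal/off-diagonal split),
if `ρ·f⋆ − f⋆ ∈ I₂` then `ρ·f⋆ = f⋆`. -/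
theorem stmt12 (n : ℕ) (ρ : Equiv.Perm (Sym2 (Fin n)))
    (hdiag : ∀ x : Sym2 (Fin n), x.IsDiag → (ρ x).IsDiag)
    (hoff : ∀ x : Sym2 (Fin n), ¬ x.IsDiag → ¬ (ρ x).IsDiag)
    (hmem : MvPolynomial.rename (⇑ρ) (fstarPoly n) - fstarPoly n ∈ minorIdeal2 n) :
    MvPolynomial.rename (⇑ρ) (fstarPoly n) = fstarPoly n := by
  classical
  -- the rank-one evaluation `X_{ij} ↦ Y_i Y_j`
  set v : Sym2 (Fin n) → MvPolynomial (Fin n) ℝ :=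
    Sym2.lift ⟨fun i j => X i * X j, fun i j => mul_comm _ _⟩ with hv
  have hvmk : ∀ i j : Fin n, v (Sym2.mk i j) = X i * X j := fun i j => by
    rw [hv]; exact Sym2.lift_mk _ i j
  have hker : aeval v (rename (⇑ρ) (fstarPoly n) - fstarPoly n) = 0 := by
    have hle : minorIdeal2 n ≤ RingHom.ker (aeval v : MvPolynomial (Sym2 (Fin n)) ℝ →ₐ[ℝ] _) := by
      rw [minorIdeal2, Ideal.span_le]
      rintro q ⟨i, j, k, l, rfl⟩
      simp only [SetLike.mem_coe, RingHom.mem_ker, map_sub, map_mul, aeval_X, hvmk]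
      ring
    exact hle hmem
  have E : aeval v (rename (⇑ρ) (fstarPoly n)) = aeval v (fstarPoly n) := by
    rwa [map_sub, sub_eq_zero] at hker
  -- choose σ on the diagonal
  have hdiag' : ∀ i : Fin n, ∃ c, ρ (Sym2.mk i i) = Sym2.mk c c := by
    intro i
    have h := hdiag (Sym2.mk i i) (by simp)
    obtain ⟨x, y, hgen⟩ : ∃ x y, ρ (Sym2.mk i i) = Sym2.mk x y :=
      Sym2.inductionOn (f := fun z => ∃ x y, z = Sym2.mk x y) (ρ (Sym2.mk i i))
        fun x y => ⟨x, y, rfl⟩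
    rw [hgen, Sym2.mk_isDiag_iff] at h
    exact ⟨x, by rw [hgen, h]⟩
  choose σ hσ using hdiag'
  -- choose representatives of the off-diagonal images
  have hoff' : ∀ p : Fin n × Fin n, ∃ c d : Fin n,
      p.1 ≠ p.2 → c ≠ d ∧ ρ (Sym2.mk p.1 p.2) = Sym2.mk c d := by
    intro p
    by_cases h : p.1 = p.2
    · exact ⟨p.1, p.2, fun h' => absurd h h'⟩
    · have hnd := hoff (Sym2.mk p.1 p.2) (by rwa [Sym2.mk_isDiag_iff])
      obtain ⟨c, d, hgen⟩ : ∃ c d, ρ (Sym2.mk p.1 p.2) = Sym2.mk c d :=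
        Sym2.inductionOn (f := fun z => ∃ c d, z = Sym2.mk c d) (ρ (Sym2.mk p.1 p.2))
          fun c d => ⟨c, d, rfl⟩
      refine ⟨c, d, fun _ => ⟨?_, hgen⟩⟩
      intro hcd
      rw [hgen, Sym2.mk_isDiag_iff] at hnd
      exact hnd hcd
  choose a b hab using hoff'
  -- rewrite E as a sum of quartic monomials
  have hE : (∑ p ∈ Finset.univ.offDiag, (X (σ p.1) * X (σ p.1)) * (X (a p) * X (b p))
        : MvPolynomial (Fin n) ℝ)
      = ∑ p ∈ Finset.univ.offDiag, (X p.1 * X p.1) * (X p.1 * X p.2) := by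
    have h1 : aeval v (rename (⇑ρ) (fstarPoly n))
        = ∑ p ∈ Finset.univ.offDiag, (X (σ p.1) * X (σ p.1)) * (X (a p) * X (b p)) := by
      rw [fstarPoly, map_sum, map_sum]
      refine Finset.sum_congr rfl fun p hp => ?_
      have hne := (Finset.mem_offDiag.mp hp).2.2
      rw [map_mul, map_mul, rename_X, rename_X, aeval_X, aeval_X,
        hσ p.1, (hab p hne).2, hvmk, hvmk]
    have h2 : aeval v (fstarPoly n)
        = ∑ p ∈ Finset.univ.offDiag, (X p.1 * X p.1) * (X p.1 * X p.2) := by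
      rw [fstarPoly, map_sum]
      refine Finset.sum_congr rfl fun p hp => ?_
      rw [map_mul, aeval_X, aeval_X, hvmk, hvmk]
    rw [← h1, ← h2, E]
  -- coefficient of a quartic monomial
  have hcoeff : ∀ (c d e f : Fin n) (m : Fin n →₀ ℕ),
      coeff m ((X c * X d) * (X e * X f) : MvPolynomial (Fin n) ℝ)
      = if Finsupp.single c 1 + Finsupp.single d 1
          + (Finsupp.single e 1 + Finsupp.single f 1) = m then 1 else 0 := by
    intro c d e f m
    rw [X, X, X, X, monomial_mul, monomial_mul, monomial_mul, coeff_monomial]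
    simp
  -- key combinatorial claim
  have hkey : ∀ p ∈ Finset.univ.offDiag, σ p.1 = a p ∨ σ p.1 = b p := by
    intro p hp
    by_contra hcon
    push_neg at hcon
    obtain ⟨h1, h2⟩ := hcon
    have hne := (Finset.mem_offDiag.mp hp).2.2
    have habne := (hab p hne).1
    set m : Fin n →₀ ℕ := Finsupp.single (σ p.1) 1 + Finsupp.single (σ p.1) 1
      + (Finsupp.single (a p) 1 + Finsupp.single (b p) 1) with hm
    have hmle : ∀ x, m x ≤ 2 := by
      intro x
      simp only [hm, Finsupp.add_apply, Finsupp.single_apply]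
      rcases eq_or_ne (σ p.1) x with h | h
      · rw [if_pos h, if_neg (show ¬ a p = x from fun hc => h1 (h.trans hc.symm)),
          if_neg (show ¬ b p = x from fun hc => h2 (h.trans hc.symm))]
        omega
      · rw [if_neg h]
        split_ifs <;> omega
    have hL : (1 : ℝ) ≤ coeff m (∑ q ∈ Finset.univ.offDiag,
        (X (σ q.1) * X (σ q.1)) * (X (a q) * X (b q)) : MvPolynomial (Fin n) ℝ) := by
      rw [coeff_sum]
      refine le_trans ?_ (Finset.single_le_sum (f := fun q =>
        coeff m ((X (σ q.1) * X (σ q.1)) * (X (a q) * X (b q)) : MvPolynomial (Fin n) ℝ))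
        (fun q _ => by simp only [hcoeff]; split_ifs <;> norm_num) hp)
      simp only [hcoeff, if_pos hm.symm]
      exact le_refl 1
    have hR : coeff m (∑ q ∈ Finset.univ.offDiag,
        (X q.1 * X q.1) * (X q.1 * X q.2) : MvPolynomial (Fin n) ℝ) = 0 := by
      rw [coeff_sum]
      refine Finset.sum_eq_zero fun q hq => ?_
      have hqne := (Finset.mem_offDiag.mp hq).2.2
      simp only [hcoeff]
      rw [if_neg]
      intro hc
      have h3 : (3 : ℕ) = m q.1 := by
        rw [← hc]
        simp [Finsupp.single_apply, Ne.symm hqne]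
      have h4 := hmle q.1
      omega
    rw [hE, hR] at hL
    norm_num at hL
  -- σ is injective
  have hσinj : Function.Injective σ := by
    intro i j h
    have h' : ρ (Sym2.mk i i) = ρ (Sym2.mk j j) := by
      rw [hσ i, hσ j, h]
    have := ρ.injective h'
    rw [Sym2.eq_iff] at this
    tauto
  -- ρ maps off-diagonal pairs as prescribed by σ
  have hρ : ∀ i j : Fin n, i ≠ j → ρ (Sym2.mk i j) = Sym2.mk (σ i) (σ j) := by
    intro i j hne
    have hpi : ((i, j) : Fin n × Fin n) ∈ Finset.univ.offDiag := by
      simp [Finset.mem_offDiag, hne]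
    have hpj : ((j, i) : Fin n × Fin n) ∈ Finset.univ.offDiag := by
      simp [Finset.mem_offDiag, hne.symm]
    have hmi : σ i ∈ ρ (Sym2.mk i j) := by
      rw [(hab (i, j) hne).2]
      rcases hkey (i, j) hpi with h | h <;> simp [h, Sym2.mem_iff]
    have hmj : σ j ∈ ρ (Sym2.mk i j) := by
      have hswap : (Sym2.mk j i : Sym2 (Fin n)) = Sym2.mk i j := Sym2.eq_swap
      rw [← hswap, (hab (j, i) hne.symm).2]
      rcases hkey (j, i) hpj with h | h <;> simp [h, Sym2.mem_iff]
    exact (Sym2.mem_and_mem_iff (fun hc => hne (hσinj hc))).mp ⟨hmi, hmj⟩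
  -- conclude
  have hσbij : Function.Bijective σ := Finite.injective_iff_bijective.mp hσinj
  let e : Fin n ≃ Fin n := Equiv.ofBijective σ hσbij
  rw [fstarPoly, map_sum]
  refine Finset.sum_equiv (e.prodCongr e) (fun p => ?_) (fun p hp => ?_)
  · simp only [Finset.mem_offDiag, Finset.mem_univ, true_and, Equiv.prodCongr_apply,
      Prod.map_fst, Prod.map_snd]
    constructor
    · intro h hc; exact h (e.injective hc)
    · intro h hc; exact h (congrArg e hc)
  · have hne := (Finset.mem_offDiag.mp hp).2.2
    rw [map_mul, rename_X, rename_X, hσ p.1, hρ p.1 p.2 hne]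
    rfl
end
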